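/- For every integer n ≥ 2, the non-dominated set Y_N of the MSp instance (G_n, c1, c2) has cardinality at least 2^n. -/

import Mathlib

namespace MSpPaper

open SimpleGraph

variable {V : Type*}

/-- Minimum total `c2`-weight of a walk from `u` to `v` using only edges in `F`
(the set of weights of such walks is a set of naturals; its infimum is `0` when no walk exists). -/
noncomputable def wdist (F : Set (Sym2 V)) (c2 : Sym2 V → ℕ) (u v : V) : ℕ :=
  sInf (Set.range fun p : (SimpleGraph.fromEdgeSet F).Walk u v => (p.edges.map c2).sum)

/-- `S` is a spanner of `G`: a subset of the edges such that the resulting subgraph is connected. -/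
def IsSpanner (G : SimpleGraph V) (S : Set (Sym2 V)) : Prop :=
  S ⊆ G.edgeSet ∧ (SimpleGraph.fromEdgeSet S).Connected

/-- First objective: total `c1`-cost of the spanner. -/
def f1 (c1 : Sym2 V → ℤ) (S : Finset (Sym2 V)) : ℤ := ∑ e ∈ S, c1 e

open scoped Classical in
/-- Second objective (stretch factor): maximum over pairs of distinct vertices of the
distance ratio `d^S(u,v)/d^E(u,v)` (junk value `0` if there is no pair of distinct vertices). -/
noncomputable def f2 [Fintype V] (E S : Set (Sym2 V)) (c2 : Sym2 V → ℕ) : ℚ :=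
  if h : ((Finset.univ : Finset (V × V)).filter fun p => p.1 ≠ p.2).Nonempty then
    ((Finset.univ : Finset (V × V)).filter fun p => p.1 ≠ p.2).sup' h
      (fun p => (wdist S c2 p.1 p.2 : ℚ) / (wdist E c2 p.1 p.2 : ℚ))
  else 0

/-- The value vector of a spanner. -/
noncomputable def valueVec [Fintype V] (G : SimpleGraph V) (c1 : Sym2 V → ℤ) (c2 : Sym2 V → ℕ)
    (S : Finset (Sym2 V)) : ℚ × ℚ :=
  ((f1 c1 S : ℚ), f2 G.edgeSet (↑S) c2)

/-- `y'` dominates `y`: componentwise `≤` and unequal. -/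
def Dominates (y' y : ℚ × ℚ) : Prop := y' ≤ y ∧ y' ≠ y

/-- The non-dominated set of an MSp instance. -/
def YN [Fintype V] (G : SimpleGraph V) (c1 : Sym2 V → ℤ) (c2 : Sym2 V → ℕ) : Set (ℚ × ℚ) :=
  {y | (∃ S : Finset (Sym2 V), IsSpanner G (↑S) ∧ valueVec G c1 c2 S = y) ∧
       ∀ S' : Finset (Sym2 V), IsSpanner G (↑S') → ¬ Dominates (valueVec G c1 c2 S') y}


/-! ### The family of instances `G_n` from Section 3 -/

/-- Vertices of `G_n`: for each `i`, the vertex `(i,0)` is `v_i`, `(i,1)` is `v_i'`,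
and `(i,2)` is `w_i`. -/
abbrev Vtx (n : ℕ) := Fin n × Fin 3

/-- The weights `(c1, c2)` of the (ordered) pair `a b` of vertices of `G_n`;
`(0, 0)` (in particular `c2 = 0`) marks non-edges. -/
def wtG (n : ℕ) (a b : Vtx n) : ℤ × ℕ :=
  if a.2 = 0 ∧ b.2 = 2 ∧ a.1 = b.1 then (2 ^ ((a.1 : ℕ) + 1), 2 ^ ((a.1 : ℕ) + 1))
  else if a.2 = 0 ∧ b.2 = 1 ∧ a.1 = b.1 then (0, 2 ^ ((a.1 : ℕ) + 1))
  else if a.2 = 1 ∧ b.2 = 2 ∧ a.1 = b.1 then (0, 2 ^ ((a.1 : ℕ) + 1))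
  else if a.2 = 2 ∧ b.2 = 0 ∧ (b.1 : ℕ) = (a.1 : ℕ) + 1 then (0, 1)
  else if a.2 = 0 ∧ b.2 = 2 ∧ (a.1 : ℕ) = 0 ∧ (b.1 : ℕ) = n - 1 then (2 ^ (n + 1), 1)
  else (0, 0)

/-- The cost function `c1` of `G_n`. -/
def c1G (n : ℕ) : Sym2 (Vtx n) → ℤ :=
  Sym2.lift ⟨fun a b => (wtG n a b).1 + (wtG n b a).1, fun _ _ => add_comm _ _⟩

/-- The length function `c2` of `G_n`. -/
def c2G (n : ℕ) : Sym2 (Vtx n) → ℕ :=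
  Sym2.lift ⟨fun a b => (wtG n a b).2 + (wtG n b a).2, fun _ _ => add_comm _ _⟩

/-- The edge set of `G_n`: exactly the pairs with positive length. -/
def EG (n : ℕ) : Set (Sym2 (Vtx n)) := {e | c2G n e ≠ 0}

/-- The graph `G_n`. -/
def Gn (n : ℕ) : SimpleGraph (Vtx n) := SimpleGraph.fromEdgeSet (EG n)

/-- The vertex `v_i`. -/
def vG (n : ℕ) (i : Fin n) : Vtx n := (i, 0)
/-- The vertex `v_i'`. -/
def pG (n : ℕ) (i : Fin n) : Vtx n := (i, 1)
/-- The vertex `w_i`. -/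
def wG (n : ℕ) (i : Fin n) : Vtx n := (i, 2)
/-- The vertex `s = v_1`. -/
def sG (n : ℕ) (hn : 0 < n) : Vtx n := (⟨0, hn⟩, 0)
/-- The vertex `t = w_n`. -/
def tG (n : ℕ) (hn : 0 < n) : Vtx n := (⟨n - 1, Nat.sub_lt hn one_pos⟩, 2)

/-- Membership in `X`: spanners of `G_n` containing every edge of zero `c1`-cost and
not containing the edge `{s, t}`. -/
def memX (n : ℕ) (hn : 0 < n) (S : Finset (Sym2 (Vtx n))) : Prop :=
  IsSpanner (Gn n) (↑S) ∧ (∀ e ∈ (Gn n).edgeSet, c1G n e = 0 → e ∈ S) ∧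
    s(sG n hn, tG n hn) ∉ S


set_option linter.unreachableTactic false
set_option linter.unusedTactic false
set_option linter.unusedVariables false

variable {n : ℕ}

def edA (i : Fin n) : Sym2 (Vtx n) := s((i, 0), (i, 1))
def edB (i : Fin n) : Sym2 (Vtx n) := s((i, 1), (i, 2))
def ed1 (i : Fin n) : Sym2 (Vtx n) := s((i, 0), (i, 2))
def edC (i j : Fin n) : Sym2 (Vtx n) := s((i, 2), (j, 0))
def edST (n : ℕ) (hn : 2 ≤ n) : Sym2 (Vtx n) :=
  s(sG n (by omega), tG n (by omega))

lemma c1G_mk (a b : Vtx n) : c1G n s(a, b) = (wtG n a b).1 + (wtG n b a).1 := rfl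
lemma c2G_mk (a b : Vtx n) : c2G n s(a, b) = (wtG n a b).2 + (wtG n b a).2 := rfl

set_option linter.unreachableTactic false
set_option linter.unusedTactic false

lemma c2_edA (i : Fin n) : c2G n (edA i) = 2 ^ ((i : ℕ) + 1) := by
  rw [edA, c2G_mk, wtG, wtG]; split_ifs <;> simp_all <;> omega
lemma c1_edA (i : Fin n) : c1G n (edA i) = 0 := by
  rw [edA, c1G_mk, wtG, wtG]; split_ifs <;> simp_all <;> omega
lemma c2_edB (i : Fin n) : c2G n (edB i) = 2 ^ ((i : ℕ) + 1) := by
  rw [edB, c2G_mk, wtG, wtG]; split_ifs <;> simp_all <;> omega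
lemma c1_edB (i : Fin n) : c1G n (edB i) = 0 := by
  rw [edB, c1G_mk, wtG, wtG]; split_ifs <;> simp_all <;> omega
lemma c2_ed1 (i : Fin n) : c2G n (ed1 i) = 2 ^ ((i : ℕ) + 1) := by
  rw [ed1, c2G_mk, wtG, wtG]; split_ifs <;> simp_all <;> omega
lemma c1_ed1 (i : Fin n) : c1G n (ed1 i) = 2 ^ ((i : ℕ) + 1) := by
  rw [ed1, c1G_mk, wtG, wtG]; split_ifs <;> simp_all <;> omega
lemma c2_edC {i j : Fin n} (h : (j : ℕ) = (i : ℕ) + 1) : c2G n (edC i j) = 1 := by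
  have hij : ¬ (j = i) := by intro he; rw [he] at h; omega
  have hji : ¬ ((i:ℕ) = (j:ℕ) + 1) := by omega
  have hj0 : ¬ ((j:ℕ) = 0) := by omega
  rw [edC, c2G_mk, wtG, wtG]
  norm_num [hij, hji, hj0, h, Fin.ext_iff]
lemma c1_edC {i j : Fin n} (h : (j : ℕ) = (i : ℕ) + 1) : c1G n (edC i j) = 0 := by
  have hij : ¬ (j = i) := by intro he; rw [he] at h; omega
  have hji : ¬ ((i:ℕ) = (j:ℕ) + 1) := by omega
  have hj0 : ¬ ((j:ℕ) = 0) := by omega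
  rw [edC, c1G_mk, wtG, wtG]
  norm_num [hij, hji, hj0, h, Fin.ext_iff]
lemma c2_edST (hn : 2 ≤ n) : c2G n (edST n hn) = 1 := by
  have h1 : ¬ ((0:ℕ) = n - 1) := by omega
  have h2 : ¬ ((0:ℕ) = n - 1 + 1) := by omega
  rw [edST, sG, tG, c2G_mk, wtG, wtG]
  norm_num [Fin.ext_iff, h1, h2]
lemma c1_edST (hn : 2 ≤ n) : c1G n (edST n hn) = 2 ^ (n + 1) := by
  have h1 : ¬ ((0:ℕ) = n - 1) := by omega
  have h2 : ¬ ((0:ℕ) = n - 1 + 1) := by omega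
  rw [edST, sG, tG, c1G_mk, wtG, wtG]
  norm_num [Fin.ext_iff, h1, h2]

/-- Classification of potential edges. -/
lemma EG_class (hn : 2 ≤ n) {e : Sym2 (Vtx n)} (he : e ∈ EG n) :
    (∃ i : Fin n, e = ed1 i ∨ e = edA i ∨ e = edB i) ∨
    (∃ i j : Fin n, (j : ℕ) = (i : ℕ) + 1 ∧ e = edC i j) ∨ e = edST n hn := by
  induction e using Sym2.ind with
  | _ a b =>
    have he' : (wtG n a b).2 ≠ 0 ∨ (wtG n b a).2 ≠ 0 := by
      rw [EG, Set.mem_setOf_eq, c2G_mk] at he; omega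
    have key : ∀ x y : Vtx n, (wtG n x y).2 ≠ 0 →
        (∃ i : Fin n, s(x,y) = ed1 i ∨ s(x,y) = edA i ∨ s(x,y) = edB i) ∨
        (∃ i j : Fin n, (j : ℕ) = (i : ℕ) + 1 ∧ s(x,y) = edC i j) ∨ s(x,y) = edST n hn := by
      intro x y hxy
      rw [wtG] at hxy
      split_ifs at hxy with h1 h2 h3 h4 h5
      · exact Or.inl ⟨x.1, Or.inl (by
          rw [ed1]
          exact Sym2.eq_iff.2 (Or.inl
            ⟨Prod.ext rfl h1.1, Prod.ext h1.2.2.symm h1.2.1⟩))⟩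
      · exact Or.inl ⟨x.1, Or.inr (Or.inl (by
          rw [edA]
          exact Sym2.eq_iff.2 (Or.inl
            ⟨Prod.ext rfl h2.1, Prod.ext h2.2.2.symm h2.2.1⟩)))⟩
      · exact Or.inl ⟨x.1, Or.inr (Or.inr (by
          rw [edB]
          exact Sym2.eq_iff.2 (Or.inl
            ⟨Prod.ext rfl h3.1, Prod.ext h3.2.2.symm h3.2.1⟩)))⟩
      · exact Or.inr (Or.inl ⟨x.1, y.1, h4.2.2, by
          rw [edC]
          exact Sym2.eq_iff.2 (Or.inl
            ⟨Prod.ext rfl h4.1, Prod.ext rfl h4.2.1⟩)⟩)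
      · refine Or.inr (Or.inr ?_)
        rw [edST, sG, tG]
        exact Sym2.eq_iff.2 (Or.inl
          ⟨Prod.ext (Fin.ext h5.2.2.1) h5.1,
            Prod.ext (Fin.ext h5.2.2.2) h5.2.1⟩)
      · simp at hxy
    rcases he' with h | h
    · exact key a b h
    · rw [Sym2.eq_swap]; exact key b a h


section WalkLemmas

variable {W : Type*} {F : Set (Sym2 W)} {c2 : Sym2 W → ℕ}

/-- weight of a walk -/
def wwt (c2 : Sym2 W → ℕ) {G : SimpleGraph W} {u v : W} (p : G.Walk u v) : ℕ :=
  (p.edges.map c2).sum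

lemma wwt_nil {G : SimpleGraph W} {u : W} : wwt c2 (Walk.nil : G.Walk u u) = 0 := rfl

lemma wwt_cons {G : SimpleGraph W} {u v w : W} (h : G.Adj u v) (p : G.Walk v w) :
    wwt c2 (Walk.cons h p) = c2 s(u, v) + wwt c2 p := by
  simp [wwt]

lemma wwt_append {G : SimpleGraph W} {u v w : W} (p : G.Walk u v) (q : G.Walk v w) :
    wwt c2 (p.append q) = wwt c2 p + wwt c2 q := by
  simp [wwt, Walk.edges_append]

lemma wwt_reverse {G : SimpleGraph W} {u v : W} (p : G.Walk u v) :
    wwt c2 p.reverse = wwt c2 p := by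
  simp [wwt, Walk.edges_reverse, List.map_reverse, List.sum_reverse]

lemma wdist_le {u v : W} (p : (fromEdgeSet F).Walk u v) :
    wdist F c2 u v ≤ wwt c2 p :=
  Nat.sInf_le ⟨p, rfl⟩

lemma le_wdist {u v : W} {k : ℕ} (hne : (fromEdgeSet F).Reachable u v)
    (h : ∀ p : (fromEdgeSet F).Walk u v, k ≤ wwt c2 p) : k ≤ wdist F c2 u v := by
  apply le_csInf
  · obtain ⟨p⟩ := hne
    exact ⟨wwt c2 p, ⟨p, rfl⟩⟩
  · rintro b ⟨p, rfl⟩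
    exact h p

lemma edge_mem_of_adj {a b : W} (h : (fromEdgeSet F).Adj a b) : s(a, b) ∈ F :=
  ((fromEdgeSet_adj _).1 h).1

lemma wwt_ge_potential (φ : W → ℤ)
    (hφ : ∀ a b : W, s(a, b) ∈ F → φ b - φ a ≤ (c2 s(a, b) : ℤ)) :
    ∀ {u v : W} (p : (fromEdgeSet F).Walk u v), φ v - φ u ≤ (wwt c2 p : ℤ) := by
  intro u v p
  induction p with
  | nil => simp [wwt_nil]
  | @cons a b c h p ih =>
    have h1 := hφ a b (edge_mem_of_adj h)
    rw [wwt_cons]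
    push_cast
    linarith

lemma wwt_ge_left {k : ℕ} {u v : W} (hne : u ≠ v)
    (hk : ∀ e ∈ F, u ∈ e → k ≤ c2 e) (p : (fromEdgeSet F).Walk u v) : k ≤ wwt c2 p := by
  cases p with
  | nil => exact absurd rfl hne
  | @cons a b c h p =>
    rw [wwt_cons]
    have := hk _ (edge_mem_of_adj h) (Sym2.mem_mk_left _ _)
    omega

lemma wwt_ge_right {k : ℕ} {u v : W}
    (hk : ∀ e ∈ F, v ∈ e → k ≤ c2 e) (p : (fromEdgeSet F).Walk u v) (hne : u ≠ v) :
    k ≤ wwt c2 p := by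
  induction p with
  | nil => exact absurd rfl hne
  | @cons a b c h p ih =>
    by_cases hb : b = c
    · subst hb
      rw [wwt_cons]
      have := hk _ (edge_mem_of_adj h) (Sym2.mem_mk_right _ _)
      omega
    · rw [wwt_cons]
      have := ih hk hb
      omega

lemma wwt_ge_one {u v : W} (hk : ∀ e ∈ F, 1 ≤ c2 e) (p : (fromEdgeSet F).Walk u v)
    (hne : u ≠ v) : 1 ≤ wwt c2 p :=
  wwt_ge_left hne (fun e he _ => hk e he) p

end WalkLemmas

/-! ### potential function for a choice `B` of direct edges -/

def costF (n : ℕ) (B : Finset (Fin n)) (j : ℕ) : ℕ :=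
  if h : j < n then (if (⟨j, h⟩ : Fin n) ∈ B then 2 ^ (j + 1) else 2 ^ (j + 2)) else 0

def baseF (n : ℕ) (B : Finset (Fin n)) (j : ℕ) : ℕ :=
  j + ∑ k ∈ Finset.range j, costF n B k

def sigF (n : ℕ) (B : Finset (Fin n)) : ℕ :=
  (n - 1) + ∑ k ∈ Finset.range n, costF n B k

def phiF (n : ℕ) (B : Finset (Fin n)) (u : Vtx n) : ℤ :=
  baseF n B (u.1 : ℕ) +
    (if u.2 = 0 then 0 else if u.2 = 1 then 2 ^ ((u.1 : ℕ) + 1) else costF n B (u.1 : ℕ))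

lemma costF_lb {B : Finset (Fin n)} {j : ℕ} (h : j < n) : 2 ^ (j + 1) ≤ costF n B j := by
  rw [costF, dif_pos h]
  split_ifs
  · exact le_refl _
  · exact Nat.pow_le_pow_right (by norm_num) (by omega)

lemma costF_ub {B : Finset (Fin n)} {j : ℕ} : costF n B j ≤ 2 ^ (j + 2) := by
  rw [costF]
  split_ifs
  · exact Nat.pow_le_pow_right (by norm_num) (by omega)
  · exact le_refl _
  · exact Nat.zero_le _

lemma costF_fin {B : Finset (Fin n)} (i : Fin n) :
    costF n B (i : ℕ) = if i ∈ B then 2 ^ ((i : ℕ) + 1) else 2 ^ ((i : ℕ) + 2) := by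
  rw [costF, dif_pos i.isLt]

lemma sigF_eq (hn : 1 ≤ n) (B : Finset (Fin n)) :
    sigF n B = baseF n B (n - 1) + costF n B (n - 1) := by
  rw [sigF, baseF]
  have h2 : ∑ k ∈ Finset.range n, costF n B k
      = ∑ k ∈ Finset.range (n - 1), costF n B k + costF n B (n - 1) := by
    rw [← Finset.sum_range_succ]
    have h1 : n - 1 + 1 = n := by omega
    rw [h1]
  rw [h2]
  ring

lemma sigF_ge (hn : 2 ≤ n) (B : Finset (Fin n)) : 7 ≤ sigF n B := by
  have h0 : 2 ^ (0 + 1) ≤ costF n B 0 := costF_lb (by omega)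
  have h1 : 2 ^ (1 + 1) ≤ costF n B 1 := costF_lb (by omega)
  have hsub : Finset.range 2 ⊆ Finset.range n := Finset.range_subset_range.2 hn
  have := Finset.sum_le_sum_of_subset (f := costF n B) hsub
  rw [Finset.sum_range_succ, Finset.sum_range_one] at this
  rw [sigF]
  norm_num at h0 h1
  have h3 : 6 ≤ ∑ k ∈ Finset.range n, costF n B k := by omega
  have h4 : 1 ≤ n - 1 := by omega
  calc (7:ℕ) = 1 + 6 := by norm_num
  _ ≤ (n - 1) + ∑ k ∈ Finset.range n, costF n B k := Nat.add_le_add h4 h3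

lemma phi_s (hn : 2 ≤ n) (B : Finset (Fin n)) : phiF n B (sG n (by omega)) = 0 := by
  simp [phiF, sG, baseF]

lemma phi_t (hn : 2 ≤ n) (B : Finset (Fin n)) :
    phiF n B (tG n (by omega)) = (sigF n B : ℤ) := by
  rw [phiF, tG, sigF_eq (by omega)]
  push_cast
  norm_num


lemma one_le_c2_EG {e : Sym2 (Vtx n)} (he : e ∈ EG n) : 1 ≤ c2G n e :=
  Nat.one_le_iff_ne_zero.2 he

lemma phi_v (B : Finset (Fin n)) (i : Fin n) :
    phiF n B (i, 0) = (baseF n B (i : ℕ) : ℤ) := by simp [phiF]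

lemma phi_p (B : Finset (Fin n)) (i : Fin n) :
    phiF n B (i, 1) = (baseF n B (i : ℕ) : ℤ) + 2 ^ ((i : ℕ) + 1) := by simp [phiF]

lemma phi_w (B : Finset (Fin n)) (i : Fin n) :
    phiF n B (i, 2) = (baseF n B (i : ℕ) : ℤ) + (costF n B (i : ℕ) : ℤ) := by simp [phiF]

lemma phi_cond (hn : 2 ≤ n) {B : Finset (Fin n)} {S : Set (Sym2 (Vtx n))} (hS : S ⊆ EG n)
    (hST : edST n hn ∉ S) (hB : ∀ i : Fin n, ed1 i ∈ S → i ∈ B) :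
    ∀ a b : Vtx n, s(a, b) ∈ S → phiF n B b - phiF n B a ≤ (c2G n s(a, b) : ℤ) := by
  intro a b hab
  rcases EG_class hn (hS hab) with ⟨i, h | h | h⟩ | ⟨i, j, hij, h⟩ | h
  · have hiB : i ∈ B := hB i (h ▸ hab)
    have hcost : costF n B (i : ℕ) = 2 ^ ((i : ℕ) + 1) := by
      rw [costF_fin, if_pos hiB]
    have hp : (0:ℤ) ≤ 2 ^ ((i:ℕ) + 1) := by positivity
    rw [h, c2_ed1]
    rw [ed1, Sym2.eq_iff] at h
    rcases h with ⟨ha, hb⟩ | ⟨ha, hb⟩ <;> subst ha <;> subst hb <;>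
      rw [phi_v, phi_w, hcost] <;> push_cast <;> linarith
  · have hp : (0:ℤ) ≤ 2 ^ ((i:ℕ) + 1) := by positivity
    rw [h, c2_edA]
    rw [edA, Sym2.eq_iff] at h
    rcases h with ⟨ha, hb⟩ | ⟨ha, hb⟩ <;> subst ha <;> subst hb <;>
      rw [phi_v, phi_p] <;> push_cast <;> linarith
  · have h1 : 2 ^ ((i:ℕ) + 1) ≤ costF n B (i : ℕ) := costF_lb i.isLt
    have h2 : costF n B (i : ℕ) ≤ 2 ^ ((i:ℕ) + 2) := costF_ub
    have h3 : (2:ℕ) ^ ((i:ℕ) + 2) = 2 ^ ((i:ℕ) + 1) + 2 ^ ((i:ℕ) + 1) := by ring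
    have hp : (0:ℤ) ≤ 2 ^ ((i:ℕ) + 1) := by positivity
    rw [h, c2_edB]
    rw [edB, Sym2.eq_iff] at h
    rcases h with ⟨ha, hb⟩ | ⟨ha, hb⟩ <;> subst ha <;> subst hb <;>
      rw [phi_p, phi_w] <;> push_cast <;> push_cast [h3] at h2 <;> linarith
  · have hsum := Finset.sum_range_succ (costF n B) (i : ℕ)
    have hbj : baseF n B (j : ℕ) = baseF n B (i : ℕ) + costF n B (i : ℕ) + 1 := by
      rw [baseF, baseF, hij, hsum]
      ring
    rw [h, c2_edC hij]
    rw [edC, Sym2.eq_iff] at h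
    rcases h with ⟨ha, hb⟩ | ⟨ha, hb⟩ <;> subst ha <;> subst hb <;>
      rw [phi_v, phi_w] <;> push_cast [hbj] <;> linarith
  · exact absurd (h ▸ hab) hST

lemma wdist_st_lb (hn : 2 ≤ n) {S' : Finset (Sym2 (Vtx n))} (hS : ↑S' ⊆ EG n)
    (hconn : (fromEdgeSet (↑S' : Set (Sym2 (Vtx n)))).Connected) (hST : edST n hn ∉ S')
    {B : Finset (Fin n)} (hB : ∀ i : Fin n, ed1 i ∈ S' → i ∈ B) :
    sigF n B ≤ wdist (↑S') (c2G n) (sG n (by omega)) (tG n (by omega)) := by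
  apply le_wdist (hconn.preconnected _ _)
  intro p
  have h := wwt_ge_potential (phiF n B)
    (phi_cond hn hS hST (fun i hi => hB i hi)) p
  rw [phi_s hn B, phi_t hn B] at h
  exact_mod_cast by linarith [h]


/-! ### the spanners `S_A` -/

def SZ (n : ℕ) : Finset (Sym2 (Vtx n)) :=
  (Finset.univ.image edA) ∪ (Finset.univ.image edB) ∪
    ((Finset.range (n - 1)).attach.image fun k =>
      edC ⟨k.1, by have := Finset.mem_range.1 k.2; omega⟩
          ⟨k.1 + 1, by have := Finset.mem_range.1 k.2; omega⟩)

def SA (n : ℕ) (A : Finset (Fin n)) : Finset (Sym2 (Vtx n)) := SZ n ∪ A.image ed1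

lemma mem_SZ {e : Sym2 (Vtx n)} : e ∈ SZ n ↔
    (∃ i : Fin n, e = edA i) ∨ (∃ i : Fin n, e = edB i) ∨
    (∃ (i : ℕ) (h : i + 1 < n), e = edC ⟨i, by omega⟩ ⟨i + 1, h⟩) := by
  simp only [SZ, Finset.mem_union, Finset.mem_image, Finset.mem_attach, Finset.mem_univ,
    true_and, exists_true_left]
  constructor
  · rintro ((⟨i, _, rfl⟩ | ⟨i, _, rfl⟩) | ⟨⟨k, hk⟩, rfl⟩)
    · exact Or.inl ⟨i, rfl⟩
    · exact Or.inr (Or.inl ⟨i, rfl⟩)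
    · exact Or.inr (Or.inr ⟨k, by have := Finset.mem_range.1 hk; omega, rfl⟩)
  · rintro (⟨i, rfl⟩ | ⟨i, rfl⟩ | ⟨i, h, rfl⟩)
    · exact Or.inl (Or.inl ⟨i, rfl⟩)
    · exact Or.inl (Or.inr ⟨i, rfl⟩)
    · exact Or.inr ⟨⟨i, Finset.mem_range.2 (by omega)⟩, rfl⟩

lemma mem_SA {A : Finset (Fin n)} {e : Sym2 (Vtx n)} : e ∈ SA n A ↔
    e ∈ SZ n ∨ ∃ i ∈ A, e = ed1 i := by
  simp only [SA, Finset.mem_union, Finset.mem_image]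
  tauto

lemma SA_sub_EG (A : Finset (Fin n)) : ↑(SA n A) ⊆ EG n := by
  intro e he
  rw [Finset.mem_coe, mem_SA] at he
  rcases he with h | ⟨i, _, rfl⟩
  · rw [mem_SZ] at h
    rcases h with ⟨i, rfl⟩ | ⟨i, rfl⟩ | ⟨i, h, rfl⟩
    · exact fun hc => by rw [c2_edA] at hc; exact absurd hc (by positivity)
    · exact fun hc => by rw [c2_edB] at hc; exact absurd hc (by positivity)
    · exact fun hc => by rw [c2_edC (by simp)] at hc; omega
  · exact fun hc => by rw [c2_ed1] at hc; exact absurd hc (by positivity)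

abbrev GA (n : ℕ) (A : Finset (Fin n)) : SimpleGraph (Vtx n) :=
  fromEdgeSet (↑(SA n A) : Set (Sym2 (Vtx n)))

section SAWalks

variable {A : Finset (Fin n)}



lemma adjA_SA {i : Fin n} : (GA n A).Adj (i, 0) (i, 1) :=
  (fromEdgeSet_adj _).2 ⟨by rw [Finset.mem_coe, mem_SA]; exact Or.inl (mem_SZ.2 (Or.inl ⟨i, rfl⟩)),
    by simp [Prod.ext_iff]⟩

lemma adjB_SA {i : Fin n} : (GA n A).Adj (i, 1) (i, 2) :=
  by
  refine (fromEdgeSet_adj _).2 ⟨?_, by simp [Prod.ext_iff]⟩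
  rw [Finset.mem_coe, mem_SA]
  exact Or.inl (mem_SZ.2 (Or.inr (Or.inl ⟨i, rfl⟩)))

lemma adj1_SA {i : Fin n} (hA : i ∈ A) : (GA n A).Adj (i, 0) (i, 2) :=
  (fromEdgeSet_adj _).2 ⟨by rw [Finset.mem_coe, mem_SA]; exact Or.inr ⟨i, hA, rfl⟩,
    by simp [Prod.ext_iff]⟩

lemma adjC_SA {i : ℕ} (h : i + 1 < n) :
    (GA n A).Adj (⟨i, by omega⟩, 2) (⟨i + 1, h⟩, 0) :=
  by
  refine (fromEdgeSet_adj _).2 ⟨?_, by simp [Prod.ext_iff, Fin.ext_iff]⟩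
  rw [Finset.mem_coe, mem_SA]
  exact Or.inl (mem_SZ.2 (Or.inr (Or.inr ⟨i, h, rfl⟩)))

/-- triangle walk from `v_i` to `w_i` of weight `costF n A i`. -/
lemma triangle_walk (i : ℕ) (h : i < n) :
    ∃ p : (GA n A).Walk (⟨i, h⟩, 0) (⟨i, h⟩, 2), wwt (c2G n) p = costF n A i := by
  by_cases hA : (⟨i, h⟩ : Fin n) ∈ A
  · refine ⟨Walk.cons (adj1_SA hA) Walk.nil, ?_⟩
    rw [wwt_cons, wwt_nil]
    have : s(((⟨i, h⟩ : Fin n), (0:Fin 3)), ((⟨i, h⟩ : Fin n), (2:Fin 3))) = ed1 ⟨i, h⟩ := rfl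
    rw [this, c2_ed1, costF, dif_pos h, if_pos hA]
    simp
  · refine ⟨Walk.cons adjA_SA (Walk.cons adjB_SA Walk.nil), ?_⟩
    rw [wwt_cons, wwt_cons, wwt_nil]
    have h1 : s(((⟨i, h⟩ : Fin n), (0:Fin 3)), ((⟨i, h⟩ : Fin n), (1:Fin 3))) = edA ⟨i, h⟩ := rfl
    have h2 : s(((⟨i, h⟩ : Fin n), (1:Fin 3)), ((⟨i, h⟩ : Fin n), (2:Fin 3))) = edB ⟨i, h⟩ := rfl
    rw [h1, h2, c2_edA, c2_edB, costF, dif_pos h, if_neg hA]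
    simp
    ring

lemma up_walk (hn : 2 ≤ n) (i : ℕ) (h : i < n) :
    ∃ p : (GA n A).Walk (sG n (by omega)) (⟨i, h⟩, 0), wwt (c2G n) p = baseF n A i := by
  induction i with
  | zero => exact ⟨Walk.nil, by simp [wwt_nil, baseF]; rfl⟩
  | succ i ih =>
    obtain ⟨p, hp⟩ := ih (by omega)
    obtain ⟨q, hq⟩ := triangle_walk (A := A) i (by omega)
    refine ⟨(p.append q).append (Walk.cons (adjC_SA h) Walk.nil), ?_⟩
    rw [wwt_append, wwt_append, wwt_cons, wwt_nil, hp, hq]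
    have h1 : s(((⟨i, by omega⟩ : Fin n), (2:Fin 3)), ((⟨i + 1, h⟩ : Fin n), (0:Fin 3)))
        = edC ⟨i, by omega⟩ ⟨i + 1, h⟩ := rfl
    rw [h1, c2_edC (by simp)]
    rw [baseF, baseF, Finset.sum_range_succ]
    ring

lemma down_walk (hn : 2 ≤ n) (i : ℕ) (h : i < n) :
    ∃ q : (GA n A).Walk (⟨i, h⟩, 2) (tG n (by omega)),
      wwt (c2G n) q + (baseF n A i + costF n A i) = sigF n A := by
  obtain ⟨d, hd⟩ : ∃ d, n - 1 - i ≤ d := ⟨n, by omega⟩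
  induction d generalizing i with
  | zero =>
    have : i = n - 1 := by omega
    subst this
    refine ⟨Walk.nil, ?_⟩
    rw [sigF_eq (by omega)]
    show 0 + _ = _
    omega
  | succ d ihd =>
    by_cases hi : i = n - 1
    · subst hi
      refine ⟨Walk.nil, ?_⟩
      rw [sigF_eq (by omega)]
      show 0 + _ = _
      omega
    · have hin : i + 1 < n := by omega
      obtain ⟨q, hq⟩ := ihd (i + 1) hin (by omega)
      obtain ⟨r, hr⟩ := triangle_walk (A := A) (i + 1) hin
      refine ⟨Walk.cons (adjC_SA hin) (r.append q), ?_⟩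
      rw [wwt_cons]
      rw [wwt_append]
      rw [hr]
      have h1 : s(((⟨i, by omega⟩ : Fin n), (2:Fin 3)), ((⟨i + 1, by omega⟩ : Fin n), (0:Fin 3)))
          = edC ⟨i, by omega⟩ ⟨i + 1, by omega⟩ := rfl
      rw [h1, c2_edC (by simp)]
      have hb : baseF n A (i + 1) = baseF n A i + costF n A i + 1 := by
        rw [baseF, baseF, Finset.sum_range_succ]
        ring
      omega

/-- anchored walks: for mainline vertices, walks to `s` and `t` with complementary weights -/
lemma anchor_walk (hn : 2 ≤ n) (i : ℕ) (h : i < n) (x : Fin 3) (hx : x ≠ 1) :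
    ∃ (pu : ℕ) (p : (GA n A).Walk (sG n (by omega)) (⟨i, h⟩, x))
      (q : (GA n A).Walk (⟨i, h⟩, x) (tG n (by omega))),
      wwt (c2G n) p = pu ∧ wwt (c2G n) q + pu = sigF n A := by
  fin_cases x
  · obtain ⟨p, hp⟩ := up_walk (A := A) hn i h
    obtain ⟨r, hr⟩ := triangle_walk (A := A) i h
    obtain ⟨q, hq⟩ := down_walk (A := A) hn i h
    exact ⟨baseF n A i, p, r.append q, hp, by rw [wwt_append, hr]; omega⟩
  · exact absurd rfl hx
  · obtain ⟨p, hp⟩ := up_walk (A := A) hn i h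
    obtain ⟨r, hr⟩ := triangle_walk (A := A) i h
    obtain ⟨q, hq⟩ := down_walk (A := A) hn i h
    exact ⟨baseF n A i + costF n A i, p.append r, q, by rw [wwt_append, hp, hr], by omega⟩

lemma mainline_walk (hn : 2 ≤ n) (i : ℕ) (h : i < n) (x : Fin 3) (hx : x ≠ 1)
    (j : ℕ) (h' : j < n) (y : Fin 3) (hy : y ≠ 1) :
    ∃ p : (GA n A).Walk (⟨i, h⟩, x) (⟨j, h'⟩, y), wwt (c2G n) p ≤ sigF n A := by
  obtain ⟨pu, p, q, hp, hq⟩ := anchor_walk (A := A) hn i h x hx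
  obtain ⟨pv, p', q', hp', hq'⟩ := anchor_walk (A := A) hn j h' y hy
  by_cases hc : pu + pv ≤ sigF n A
  · refine ⟨p.reverse.append p', ?_⟩
    rw [wwt_append, wwt_reverse, hp, hp']
    exact hc
  · refine ⟨q.append q'.reverse, ?_⟩
    rw [wwt_append, wwt_reverse]
    omega

end SAWalks


/-! ### connectivity and distance bounds -/

def dD (u : Vtx n) : ℕ := if u.2 = 1 then 2 ^ ((u.1 : ℕ) + 1) else 0

lemma GA_reach (hn : 2 ≤ n) (A : Finset (Fin n)) (u : Vtx n) :
    (GA n A).Reachable (sG n (by omega)) u := by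
  obtain ⟨⟨i, h⟩, x⟩ := u
  obtain ⟨p, _⟩ := up_walk (A := A) hn i h
  fin_cases x
  · exact ⟨p⟩
  · exact ⟨p.append (Walk.cons adjA_SA Walk.nil)⟩
  · obtain ⟨r, _⟩ := triangle_walk (A := A) i h
    exact ⟨p.append r⟩

lemma GA_conn (hn : 2 ≤ n) (A : Finset (Fin n)) : (GA n A).Connected := by
  rw [connected_iff]
  exact ⟨fun u v => (GA_reach hn A u).symm.trans (GA_reach hn A v), ⟨sG n (by omega)⟩⟩

lemma Gn_conn (hn : 2 ≤ n) : (Gn n).Connected :=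
  (GA_conn hn ∅).mono (fromEdgeSet_mono (SA_sub_EG ∅))

lemma E_sub_EG : (Gn n).edgeSet ⊆ EG n := by
  rw [Gn, edgeSet_fromEdgeSet]
  exact Set.diff_subset

lemma E_reach (hn : 2 ≤ n) (u v : Vtx n) :
    (fromEdgeSet ((Gn n).edgeSet)).Reachable u v := by
  rw [fromEdgeSet_edgeSet]
  exact (Gn_conn hn).preconnected u v

lemma one_le_wdist_E (hn : 2 ≤ n) {u v : Vtx n} (huv : u ≠ v) :
    1 ≤ wdist (Gn n).edgeSet (c2G n) u v :=
  le_wdist (E_reach hn u v)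
    (fun p => wwt_ge_one (fun e he => one_le_c2_EG (E_sub_EG he)) p huv)

lemma c2_incident_mid (hn : 2 ≤ n) {e : Sym2 (Vtx n)} (he : e ∈ EG n) {i : Fin n}
    (hm : ((i, (1 : Fin 3)) : Vtx n) ∈ e) : c2G n e = 2 ^ ((i : ℕ) + 1) := by
  rcases EG_class hn he with ⟨j, rfl | rfl | rfl⟩ | ⟨j, k, hjk, rfl⟩ | rfl
  · rw [ed1, Sym2.mem_iff, Prod.ext_iff, Prod.ext_iff] at hm
    simp at hm
  · rw [edA, Sym2.mem_iff, Prod.ext_iff, Prod.ext_iff] at hm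
    have : i = j := by
      rcases hm with ⟨h1, h2⟩ | ⟨h1, h2⟩
      · simp at h2
      · exact h1
    rw [this, c2_edA]
  · rw [edB, Sym2.mem_iff, Prod.ext_iff, Prod.ext_iff] at hm
    have : i = j := by
      rcases hm with ⟨h1, h2⟩ | ⟨h1, h2⟩
      · exact h1
      · simp at h2
    rw [this, c2_edB]
  · rw [edC, Sym2.mem_iff, Prod.ext_iff, Prod.ext_iff] at hm
    simp at hm
  · rw [edST, sG, tG, Sym2.mem_iff, Prod.ext_iff, Prod.ext_iff] at hm
    simp at hm

lemma dD_le_wdist_E_left (hn : 2 ≤ n) {u v : Vtx n} (huv : u ≠ v) :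
    dD u ≤ wdist (Gn n).edgeSet (c2G n) u v := by
  obtain ⟨i, x⟩ := u
  by_cases hx : x = 1
  · subst hx
    apply le_wdist (E_reach hn _ v)
    intro p
    apply wwt_ge_left huv _ p
    intro e he hm
    rw [c2_incident_mid hn (E_sub_EG he) hm, dD]
    simp
  · rw [dD, if_neg hx]
    exact Nat.zero_le _

lemma dD_le_wdist_E_right (hn : 2 ≤ n) {u v : Vtx n} (huv : u ≠ v) :
    dD v ≤ wdist (Gn n).edgeSet (c2G n) u v := by
  obtain ⟨i, x⟩ := v
  by_cases hx : x = 1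
  · subst hx
    apply le_wdist (E_reach hn _ _)
    intro p
    apply wwt_ge_right _ p huv
    intro e he hm
    rw [c2_incident_mid hn (E_sub_EG he) hm, dD]
    simp
  · rw [dD, if_neg hx]
    exact Nat.zero_le _

lemma dD_zero_or_two (u : Vtx n) : dD u = 0 ∨ 2 ≤ dD u := by
  rw [dD]
  split_ifs
  · right
    calc 2 = 2 ^ 1 := by norm_num
    _ ≤ 2 ^ ((u.1 : ℕ) + 1) := Nat.pow_le_pow_right (by norm_num) (by omega)
  · exact Or.inl rfl

/-- master upper bound for distances in `S_A`. -/
lemma wdist_SA_ub (hn : 2 ≤ n) (A : Finset (Fin n)) (u v : Vtx n) :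
    wdist (↑(SA n A)) (c2G n) u v ≤ dD u + dD v + sigF n A := by
  obtain ⟨⟨i, hi⟩, x⟩ := u
  obtain ⟨⟨j, hj⟩, y⟩ := v
  by_cases hx : x = 1 <;> by_cases hy : y = 1
  · subst hx; subst hy
    by_cases hij : i = j
    · subst hij
      have h0 := wdist_le (c2 := c2G n)
        (Walk.nil : (GA n A).Walk ((⟨i, hi⟩ : Fin n), 1) ((⟨i, hi⟩ : Fin n), 1))
      rw [wwt_nil] at h0
      omega
    · obtain ⟨p, hp⟩ := mainline_walk (A := A) hn i hi 2 (by decide) j hj 2 (by decide)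
      have h0 := wdist_le (c2 := c2G n)
        ((Walk.cons adjB_SA p).append (Walk.cons (adjB_SA (i := ⟨j, hj⟩)) Walk.nil).reverse)
      rw [wwt_append, wwt_reverse, wwt_cons, wwt_cons, wwt_nil] at h0
      have e1 : s(((⟨i, hi⟩ : Fin n), (1:Fin 3)), ((⟨i, hi⟩ : Fin n), (2:Fin 3)))
          = edB ⟨i, hi⟩ := rfl
      have e2 : s(((⟨j, hj⟩ : Fin n), (1:Fin 3)), ((⟨j, hj⟩ : Fin n), (2:Fin 3)))
          = edB ⟨j, hj⟩ := rfl
      rw [e1, e2, c2_edB, c2_edB] at h0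
      have hd1 : dD ((⟨i, hi⟩ : Fin n), (1:Fin 3)) = 2 ^ (i + 1) := by simp [dD]
      have hd2 : dD ((⟨j, hj⟩ : Fin n), (1:Fin 3)) = 2 ^ (j + 1) := by simp [dD]
      rw [hd1, hd2]
      simp only [Fin.val_mk] at h0
      omega
  · subst hx
    obtain ⟨p, hp⟩ := mainline_walk (A := A) hn i hi 2 (by decide) j hj y hy
    have h0 := wdist_le (c2 := c2G n) (Walk.cons adjB_SA p)
    rw [wwt_cons] at h0
    have e1 : s(((⟨i, hi⟩ : Fin n), (1:Fin 3)), ((⟨i, hi⟩ : Fin n), (2:Fin 3)))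
        = edB ⟨i, hi⟩ := rfl
    rw [e1, c2_edB] at h0
    have hd1 : dD ((⟨i, hi⟩ : Fin n), (1:Fin 3)) = 2 ^ (i + 1) := by simp [dD]
    have hd2 : dD ((⟨j, hj⟩ : Fin n), y) = 0 := by simp [dD, hy]
    rw [hd1, hd2]
    simp only [Fin.val_mk] at h0
    omega
  · subst hy
    obtain ⟨p, hp⟩ := mainline_walk (A := A) hn i hi x hx j hj 2 (by decide)
    have h0 := wdist_le (c2 := c2G n)
      (p.append (Walk.cons (adjB_SA (i := ⟨j, hj⟩)) Walk.nil).reverse)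
    rw [wwt_append, wwt_reverse, wwt_cons, wwt_nil] at h0
    have e2 : s(((⟨j, hj⟩ : Fin n), (1:Fin 3)), ((⟨j, hj⟩ : Fin n), (2:Fin 3)))
        = edB ⟨j, hj⟩ := rfl
    rw [e2, c2_edB] at h0
    have hd1 : dD ((⟨i, hi⟩ : Fin n), x) = 0 := by simp [dD, hx]
    have hd2 : dD ((⟨j, hj⟩ : Fin n), (1:Fin 3)) = 2 ^ (j + 1) := by simp [dD]
    rw [hd1, hd2]
    simp only [Fin.val_mk] at h0
    omega
  · obtain ⟨p, hp⟩ := mainline_walk (A := A) hn i hi x hx j hj y hy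
    have h0 := wdist_le (c2 := c2G n) p
    have hd1 : dD ((⟨i, hi⟩ : Fin n), x) = 0 := by simp [dD, hx]
    have hd2 : dD ((⟨j, hj⟩ : Fin n), y) = 0 := by simp [dD, hy]
    rw [hd1, hd2]
    omega


/-! ### f1 and f2 facts -/

lemma c1_nonneg_EG (hn : 2 ≤ n) {e : Sym2 (Vtx n)} (he : e ∈ EG n) : 0 ≤ c1G n e := by
  rcases EG_class hn he with ⟨i, rfl | rfl | rfl⟩ | ⟨i, j, hij, rfl⟩ | rfl
  · rw [c1_ed1]; positivity
  · simp [c1_edA]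
  · simp [c1_edB]
  · simp [c1_edC hij]
  · rw [c1_edST]; positivity

lemma ed1_inj : Function.Injective (ed1 (n := n)) := by
  intro i j h
  rw [ed1, ed1, Sym2.eq_iff] at h
  rcases h with ⟨h1, h2⟩ | ⟨h1, h2⟩
  · exact congrArg Prod.fst h1
  · exact absurd (congrArg Prod.snd h1) (by simp)

lemma ed1_not_mem_SZ (i : Fin n) : ed1 i ∉ SZ n := by
  intro h
  rw [mem_SZ] at h
  rcases h with ⟨j, hj⟩ | ⟨j, hj⟩ | ⟨k, hk, hj⟩
  · simp [ed1, edA, Sym2.eq_iff, Prod.ext_iff] at hj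
  · simp [ed1, edB, Sym2.eq_iff, Prod.ext_iff] at hj
  · simp [ed1, edC, Sym2.eq_iff, Prod.ext_iff, Fin.ext_iff] at hj
    omega

lemma f1_SA (hn : 2 ≤ n) (A : Finset (Fin n)) :
    f1 (c1G n) (SA n A) = ∑ i ∈ A, (2:ℤ) ^ ((i : ℕ) + 1) := by
  have hdisj : Disjoint (SZ n) (A.image ed1) := by
    rw [Finset.disjoint_left]
    intro e he hm
    obtain ⟨i, _, rfl⟩ := Finset.mem_image.1 hm
    exact ed1_not_mem_SZ i he
  rw [f1, SA, Finset.sum_union hdisj]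
  have h1 : ∑ e ∈ SZ n, c1G n e = 0 := by
    apply Finset.sum_eq_zero
    intro e he
    rcases mem_SZ.1 he with ⟨i, rfl⟩ | ⟨i, rfl⟩ | ⟨k, hk, rfl⟩
    · exact c1_edA i
    · exact c1_edB i
    · exact c1_edC (by simp)
  have h2 : ∑ e ∈ A.image ed1, c1G n e = ∑ i ∈ A, (2:ℤ) ^ ((i : ℕ) + 1) := by
    rw [Finset.sum_image (fun i _ j _ h => ed1_inj h)]
    exact Finset.sum_congr rfl (fun i _ => c1_ed1 i)
  rw [h1, h2, zero_add]

lemma sum_range_pow (m : ℕ) : ∑ i ∈ Finset.range m, (2:ℤ) ^ (i + 1) = 2 ^ (m + 1) - 2 := by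
  induction m with
  | zero => simp
  | succ m ih =>
    rw [Finset.sum_range_succ, ih]
    ring

/-! ### binary sums are injective -/

lemma sum_two_pow_lt : ∀ (m : ℕ) (T : Finset ℕ), (∀ a ∈ T, a < m) → ∑ a ∈ T, 2 ^ a < 2 ^ m := by
  intro m
  induction m with
  | zero =>
    intro T hT
    have : T = ∅ := Finset.eq_empty_of_forall_notMem (fun a ha => by have := hT a ha; omega)
    simp [this]
  | succ m ih =>
    intro T hT
    have hsplit : ∑ a ∈ T, 2 ^ a = ∑ a ∈ T.erase m, 2 ^ a + (if m ∈ T then 2 ^ m else 0) := by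
      split_ifs with hm
      · rw [Finset.sum_erase_add _ _ hm]
      · rw [Finset.erase_eq_of_notMem hm, add_zero]
    have h1 := ih (T.erase m) (fun a ha => by
      have h2 := hT a (Finset.mem_of_mem_erase ha)
      have h3 := Finset.ne_of_mem_erase ha
      omega)
    have h4 : (if m ∈ T then 2 ^ m else 0) ≤ 2 ^ m := by split_ifs <;> simp
    rw [hsplit, pow_succ]
    omega

lemma sum_two_pow_inj : ∀ (m : ℕ) (T U : Finset ℕ), (∀ a ∈ T, a < m) → (∀ a ∈ U, a < m) →
    ∑ a ∈ T, 2 ^ a = ∑ a ∈ U, 2 ^ a → T = U := by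
  intro m
  induction m with
  | zero =>
    intro T U hT hU _
    have h1 : T = ∅ := Finset.eq_empty_of_forall_notMem (fun a ha => by have := hT a ha; omega)
    have h2 : U = ∅ := Finset.eq_empty_of_forall_notMem (fun a ha => by have := hU a ha; omega)
    rw [h1, h2]
  | succ m ih =>
    intro T U hT hU hsum
    have key : ∀ T' U' : Finset ℕ, (∀ a ∈ T', a < m + 1) → (∀ a ∈ U', a < m + 1) →
        ∑ a ∈ T', 2 ^ a = ∑ a ∈ U', 2 ^ a → m ∈ T' → m ∈ U' := by
      intro T' U' hT' hU' hs hm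
      by_contra hmu
      have h1 : 2 ^ m ≤ ∑ a ∈ T', 2 ^ a :=
        Finset.single_le_sum (f := fun a => 2 ^ a) (fun a _ => Nat.zero_le _) hm
      have h2 : ∑ a ∈ U', 2 ^ a < 2 ^ m :=
        sum_two_pow_lt m U' (fun a ha => by
          have := hU' a ha
          rcases Nat.lt_succ_iff_lt_or_eq.1 this with h | h
          · exact h
          · exact absurd (h ▸ ha) hmu)
      omega
    have hmem : (m ∈ T) ↔ (m ∈ U) :=
      ⟨fun h => key T U hT hU hsum h, fun h => key U T hU hT hsum.symm h⟩
    have hT' : ∀ a ∈ T.erase m, a < m := fun a ha => by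
      have h2 := hT a (Finset.mem_of_mem_erase ha)
      have h3 := Finset.ne_of_mem_erase ha
      omega
    have hU' : ∀ a ∈ U.erase m, a < m := fun a ha => by
      have h2 := hU a (Finset.mem_of_mem_erase ha)
      have h3 := Finset.ne_of_mem_erase ha
      omega
    have hsum' : ∑ a ∈ T.erase m, 2 ^ a = ∑ a ∈ U.erase m, 2 ^ a := by
      by_cases hm : m ∈ T
      · have hmu : m ∈ U := hmem.1 hm
        have e1 := Finset.sum_erase_add T (fun a => 2 ^ a) hm
        have e2 := Finset.sum_erase_add U (fun a => 2 ^ a) hmu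
        beta_reduce at e1 e2
        omega
      · have hmu : m ∉ U := fun h => hm (hmem.2 h)
        rw [Finset.erase_eq_of_notMem hm, Finset.erase_eq_of_notMem hmu]
        exact hsum
    have herase := ih _ _ hT' hU' hsum'
    ext a
    by_cases ha : a = m
    · subst ha
      exact hmem
    · constructor
      · intro h
        have h5 := Finset.mem_erase.2 ⟨ha, h⟩
        rw [herase] at h5
        exact (Finset.mem_erase.1 h5).2
      · intro h
        have h5 := Finset.mem_erase.2 ⟨ha, h⟩
        rw [← herase] at h5
        exact (Finset.mem_erase.1 h5).2


lemma s_ne_t (hn : 2 ≤ n) {h1 h2 : 0 < n} : sG n h1 ≠ tG n h2 := by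
  intro h
  have hv := congrArg (fun p : Vtx n => (p.1 : ℕ)) h
  simp [sG, tG] at hv
  omega

lemma f2_le {E S : Set (Sym2 (Vtx n))} {q : ℚ} (hq : 0 ≤ q)
    (h : ∀ u v : Vtx n, u ≠ v →
      (wdist S (c2G n) u v : ℚ) / (wdist E (c2G n) u v : ℚ) ≤ q) :
    f2 E S (c2G n) ≤ q := by
  unfold f2
  split_ifs with hp
  · apply Finset.sup'_le
    rintro ⟨u, v⟩ hm
    simp only [Finset.mem_filter] at hm
    exact h u v hm.2
  · exact hq

lemma le_f2 {E S : Set (Sym2 (Vtx n))} {q : ℚ} (u v : Vtx n) (huv : u ≠ v)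
    (h : q ≤ (wdist S (c2G n) u v : ℚ) / (wdist E (c2G n) u v : ℚ)) :
    q ≤ f2 E S (c2G n) := by
  unfold f2
  split_ifs with hp
  · refine le_trans h ?_
    refine Finset.le_sup' (f := fun p : Vtx n × Vtx n =>
      (wdist S (c2G n) p.1 p.2 : ℚ) / (wdist E (c2G n) p.1 p.2 : ℚ)) (b := (u, v)) ?_
    simp [huv]
  · exact absurd ⟨(u, v), by simp [huv]⟩ hp

lemma adjST (hn : 2 ≤ n) :
    (fromEdgeSet ((Gn n).edgeSet)).Adj (sG n (by omega)) (tG n (by omega)) := by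
  rw [fromEdgeSet_edgeSet, Gn]
  refine (fromEdgeSet_adj _).2 ⟨?_, s_ne_t hn⟩
  intro hc
  rw [show s(sG n (by omega : (0:ℕ) < n), tG n (by omega : (0:ℕ) < n)) = edST n hn from rfl,
    c2_edST hn] at hc
  omega

lemma wdist_E_st (hn : 2 ≤ n) :
    wdist (Gn n).edgeSet (c2G n) (sG n (by omega)) (tG n (by omega)) = 1 := by
  apply le_antisymm
  · have h0 := wdist_le (c2 := c2G n) (Walk.cons (adjST hn) Walk.nil)
    rw [wwt_cons, wwt_nil] at h0
    rw [show s(sG n (by omega : (0:ℕ) < n), tG n (by omega : (0:ℕ) < n)) = edST n hn from rfl,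
      c2_edST hn] at h0
    omega
  · exact one_le_wdist_E hn (s_ne_t hn)

lemma f2_S'_ge (hn : 2 ≤ n) {S' : Finset (Sym2 (Vtx n))} (hsp : IsSpanner (Gn n) ↑S')
    (hST : edST n hn ∉ S') {B : Finset (Fin n)} (hB : ∀ i : Fin n, ed1 i ∈ S' → i ∈ B) :
    (sigF n B : ℚ) ≤ f2 (Gn n).edgeSet (↑S') (c2G n) := by
  apply le_f2 (sG n (by omega)) (tG n (by omega)) (s_ne_t hn)
  rw [wdist_E_st hn]
  norm_num
  have h := wdist_st_lb hn (Set.Subset.trans hsp.1 E_sub_EG) hsp.2 hST hB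
  exact_mod_cast h

lemma f2_SA_le (hn : 2 ≤ n) (A : Finset (Fin n)) :
    f2 (Gn n).edgeSet (↑(SA n A)) (c2G n) ≤ (sigF n A : ℚ) := by
  apply f2_le (by positivity)
  intro u v huv
  have hb1 : 1 ≤ wdist (Gn n).edgeSet (c2G n) u v := one_le_wdist_E hn huv
  have hbu := dD_le_wdist_E_left hn huv
  have hbv := dD_le_wdist_E_right hn huv
  have ha := wdist_SA_ub hn A u v
  have hs7 := sigF_ge hn A
  set a := wdist (↑(SA n A)) (c2G n) u v with hadef
  set b := wdist (Gn n).edgeSet (c2G n) u v with hbdef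
  have hb0 : (0:ℚ) < (b:ℚ) := by exact_mod_cast Nat.lt_of_lt_of_le Nat.zero_lt_one hb1
  rw [div_le_iff₀ hb0]
  have ha' : (a:ℚ) ≤ (dD u : ℚ) + (dD v : ℚ) + (sigF n A : ℚ) := by exact_mod_cast ha
  have hbu' : (dD u : ℚ) ≤ (b:ℚ) := by exact_mod_cast hbu
  have hbv' : (dD v : ℚ) ≤ (b:ℚ) := by exact_mod_cast hbv
  have hb1' : (1:ℚ) ≤ (b:ℚ) := by exact_mod_cast hb1
  have hs7' : (7:ℚ) ≤ (sigF n A : ℚ) := by exact_mod_cast hs7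
  have hdu0 : (0:ℚ) ≤ (dD u : ℚ) := by positivity
  have hdv0 : (0:ℚ) ≤ (dD v : ℚ) := by positivity
  rcases dD_zero_or_two (n := n) u with h1 | h1 <;> rcases dD_zero_or_two (n := n) v with h2 | h2
  · have h1' : (dD u : ℚ) = 0 := by exact_mod_cast h1
    have h2' : (dD v : ℚ) = 0 := by exact_mod_cast h2
    have key : (sigF n A : ℚ) * 1 ≤ (sigF n A : ℚ) * (b:ℚ) :=
      mul_le_mul_of_nonneg_left hb1' (by linarith)
    linarith
  · have h2' : (2:ℚ) ≤ (dD v : ℚ) := by exact_mod_cast h2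
    have hb2 : (2:ℚ) ≤ (b:ℚ) := le_trans h2' hbv'
    have key : ((sigF n A : ℚ) - 2) * 2 ≤ ((sigF n A : ℚ) - 2) * (b:ℚ) :=
      mul_le_mul_of_nonneg_left hb2 (by linarith)
    linarith
  · have h1' : (2:ℚ) ≤ (dD u : ℚ) := by exact_mod_cast h1
    have hb2 : (2:ℚ) ≤ (b:ℚ) := le_trans h1' hbu'
    have key : ((sigF n A : ℚ) - 2) * 2 ≤ ((sigF n A : ℚ) - 2) * (b:ℚ) :=
      mul_le_mul_of_nonneg_left hb2 (by linarith)
    linarith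
  · have h1' : (2:ℚ) ≤ (dD u : ℚ) := by exact_mod_cast h1
    have hb2 : (2:ℚ) ≤ (b:ℚ) := le_trans h1' hbu'
    have key : ((sigF n A : ℚ) - 2) * 2 ≤ ((sigF n A : ℚ) - 2) * (b:ℚ) :=
      mul_le_mul_of_nonneg_left hb2 (by linarith)
    linarith

lemma EG_not_diag {e : Sym2 (Vtx n)} (he : e ∈ EG n) : ¬ e.IsDiag := by
  induction e using Sym2.ind with
  | _ a b =>
    rw [Sym2.mk_isDiag_iff]
    rintro rfl
    apply he
    show c2G n s(a, a) = 0
    rw [c2G_mk, wtG]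
    split_ifs <;> simp_all <;> omega

lemma SA_spanner (hn : 2 ≤ n) (A : Finset (Fin n)) : IsSpanner (Gn n) ↑(SA n A) := by
  constructor
  · intro e he
    rw [Gn, edgeSet_fromEdgeSet]
    exact ⟨SA_sub_EG A he, EG_not_diag (SA_sub_EG A he)⟩
  · exact GA_conn hn A

lemma sum_sig (hn : 2 ≤ n) (C : Finset (Fin n)) :
    ∑ i ∈ C, 2 ^ ((i : ℕ) + 1) + sigF n C
      = (n - 1) + ∑ i ∈ (Finset.univ : Finset (Fin n)), 2 ^ ((i : ℕ) + 2) := by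
  have hsub : C ⊆ Finset.univ := Finset.subset_univ C
  have h0 : sigF n C = (n - 1) + ∑ i : Fin n, costF n C (i : ℕ) := by
    rw [sigF, ← Fin.sum_univ_eq_sum_range (fun k => costF n C k) n]
  have h4 := Finset.sum_sdiff (f := fun i : Fin n => costF n C (i : ℕ)) hsub
  have h5 : ∑ i ∈ C, costF n C (i : ℕ) = ∑ i ∈ C, 2 ^ ((i : ℕ) + 1) :=
    Finset.sum_congr rfl (fun i hi => by rw [costF_fin, if_pos hi])
  have h6 : ∑ i ∈ Finset.univ \ C, costF n C (i : ℕ)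
      = ∑ i ∈ Finset.univ \ C, 2 ^ ((i : ℕ) + 2) :=
    Finset.sum_congr rfl (fun i hi => by rw [costF_fin, if_neg (Finset.mem_sdiff.1 hi).2])
  have h7 := Finset.sum_sdiff (f := fun i : Fin n => 2 ^ ((i : ℕ) + 2)) hsub
  have h2 : ∑ i ∈ C, 2 ^ ((i : ℕ) + 1) + ∑ i ∈ C, 2 ^ ((i : ℕ) + 1)
      = ∑ i ∈ C, 2 ^ ((i : ℕ) + 2) := by
    rw [← Finset.sum_add_distrib]
    exact Finset.sum_congr rfl (fun i _ => by ring)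
  beta_reduce at h4 h7
  omega

lemma sumA_inj {A A' : Finset (Fin n)}
    (h : ∑ i ∈ A, 2 ^ ((i : ℕ) + 1) = ∑ i ∈ A', 2 ^ ((i : ℕ) + 1)) : A = A' := by
  have hinj : ∀ (C : Finset (Fin n)),
      ∑ a ∈ C.image (fun i : Fin n => (i : ℕ) + 1), 2 ^ a = ∑ i ∈ C, 2 ^ ((i : ℕ) + 1) :=
    fun C => Finset.sum_image (fun i _ j _ hh => Fin.ext (by omega))
  have hbT : ∀ a ∈ A.image (fun i : Fin n => (i : ℕ) + 1), a < n + 1 := by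
    intro a ha
    obtain ⟨i, _, rfl⟩ := Finset.mem_image.1 ha
    omega
  have hbU : ∀ a ∈ A'.image (fun i : Fin n => (i : ℕ) + 1), a < n + 1 := by
    intro a ha
    obtain ⟨i, _, rfl⟩ := Finset.mem_image.1 ha
    omega
  have himg := sum_two_pow_inj (n + 1) _ _ hbT hbU (by rw [hinj A, hinj A']; exact h)
  ext i
  constructor
  · intro hi
    have : ((i : ℕ) + 1) ∈ A'.image (fun i : Fin n => (i : ℕ) + 1) := by
      rw [← himg]
      exact Finset.mem_image_of_mem _ hi
    obtain ⟨j, hj, hval⟩ := Finset.mem_image.1 this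
    have : j = i := Fin.ext (by omega)
    exact this ▸ hj
  · intro hi
    have : ((i : ℕ) + 1) ∈ A.image (fun i : Fin n => (i : ℕ) + 1) := by
      rw [himg]
      exact Finset.mem_image_of_mem _ hi
    obtain ⟨j, hj, hval⟩ := Finset.mem_image.1 this
    have : j = i := Fin.ext (by omega)
    exact this ▸ hj


lemma f1_SA_nat (hn : 2 ≤ n) (A : Finset (Fin n)) :
    f1 (c1G n) (SA n A) = ((∑ i ∈ A, 2 ^ ((i : ℕ) + 1) : ℕ) : ℤ) := by
  rw [f1_SA hn A]
  push_cast
  rfl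

lemma SA_nondominated (hn : 2 ≤ n) (A : Finset (Fin n)) (S' : Finset (Sym2 (Vtx n)))
    (hsp : IsSpanner (Gn n) ↑S') :
    ¬ Dominates (valueVec (Gn n) (c1G n) (c2G n) S')
      (valueVec (Gn n) (c1G n) (c2G n) (SA n A)) := by
  rintro ⟨hle, hne⟩
  rw [Prod.le_def] at hle
  obtain ⟨h1, h2⟩ := hle
  simp only [valueVec] at h1 h2
  by_cases hST : edST n hn ∈ S'
  · have hS'b : (2:ℤ) ^ (n + 1) ≤ f1 (c1G n) S' := by
      have h0 := Finset.single_le_sum (f := c1G n)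
        (fun e he => c1_nonneg_EG hn (E_sub_EG (hsp.1 (Finset.mem_coe.2 he)))) hST
      rw [c1_edST hn] at h0
      exact h0
    have hSAub : f1 (c1G n) (SA n A) ≤ 2 ^ (n + 1) - 2 := by
      rw [f1_SA hn A]
      have hsum := Finset.sum_le_sum_of_subset_of_nonneg (Finset.subset_univ A)
        (fun i _ _ => by positivity : ∀ i ∈ Finset.univ, i ∉ A → (0:ℤ) ≤ 2 ^ ((i : ℕ) + 1))
      have huniv : ∑ i ∈ (Finset.univ : Finset (Fin n)), (2:ℤ) ^ ((i : ℕ) + 1)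
          = 2 ^ (n + 1) - 2 := by
        rw [Fin.sum_univ_eq_sum_range (fun k => (2:ℤ) ^ (k + 1)) n]
        exact sum_range_pow n
      linarith
    have hq1 : ((2:ℚ)) ^ (n + 1) ≤ (f1 (c1G n) S' : ℚ) := by exact_mod_cast hS'b
    have hq2 : (f1 (c1G n) (SA n A) : ℚ) ≤ (2:ℚ) ^ (n + 1) - 2 := by exact_mod_cast hSAub
    linarith
  · classical
    set B := Finset.univ.filter (fun i : Fin n => ed1 i ∈ S') with hBdef
    have hB : ∀ i : Fin n, ed1 i ∈ S' → i ∈ B :=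
      fun i h => Finset.mem_filter.2 ⟨Finset.mem_univ _, h⟩
    have hf2B := f2_S'_ge hn hsp hST hB
    have hf1B : ((∑ i ∈ B, 2 ^ ((i : ℕ) + 1) : ℕ) : ℤ) ≤ f1 (c1G n) S' := by
      have himg : B.image ed1 ⊆ S' := by
        intro e he
        obtain ⟨i, hi, rfl⟩ := Finset.mem_image.1 he
        exact (Finset.mem_filter.1 hi).2
      have h0 := Finset.sum_le_sum_of_subset_of_nonneg himg
        (fun e he _ => c1_nonneg_EG hn (E_sub_EG (hsp.1 (Finset.mem_coe.2 he))))
      have h3 : ∑ e ∈ B.image ed1, c1G n e = ∑ i ∈ B, (2:ℤ) ^ ((i : ℕ) + 1) := by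
        rw [Finset.sum_image (fun i _ j _ h => ed1_inj h)]
        exact Finset.sum_congr rfl (fun i _ => c1_ed1 i)
      rw [h3] at h0
      rw [f1]
      calc ((∑ i ∈ B, 2 ^ ((i : ℕ) + 1) : ℕ) : ℤ) = ∑ i ∈ B, (2:ℤ) ^ ((i : ℕ) + 1) := by
            push_cast; rfl
      _ ≤ _ := h0
    have hf2A := f2_SA_le hn A
    have hKB := sum_sig hn B
    have hKA := sum_sig hn A
    -- assemble in ℚ
    have q3 : ((∑ i ∈ B, 2 ^ ((i : ℕ) + 1) : ℕ) : ℚ) ≤ (f1 (c1G n) S' : ℚ) := by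
      exact_mod_cast hf1B
    have q4 : (f1 (c1G n) (SA n A) : ℚ) = ((∑ i ∈ A, 2 ^ ((i : ℕ) + 1) : ℕ) : ℚ) := by
      exact_mod_cast f1_SA_nat hn A
    have qKB : ((∑ i ∈ B, 2 ^ ((i : ℕ) + 1) : ℕ) : ℚ) + (sigF n B : ℚ)
        = ((n - 1 : ℕ) : ℚ)
          + ((∑ i ∈ (Finset.univ : Finset (Fin n)), 2 ^ ((i : ℕ) + 2) : ℕ) : ℚ) := by
      exact_mod_cast hKB
    have qKA : ((∑ i ∈ A, 2 ^ ((i : ℕ) + 1) : ℕ) : ℚ) + (sigF n A : ℚ)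
        = ((n - 1 : ℕ) : ℚ)
          + ((∑ i ∈ (Finset.univ : Finset (Fin n)), 2 ^ ((i : ℕ) + 2) : ℕ) : ℚ) := by
      exact_mod_cast hKA
    have e1 : (f1 (c1G n) S' : ℚ) = (f1 (c1G n) (SA n A) : ℚ) := by linarith
    have e2 : f2 (Gn n).edgeSet (↑S') (c2G n) = f2 (Gn n).edgeSet (↑(SA n A)) (c2G n) := by
      linarith
    exact hne (by rw [valueVec, valueVec, e1, e2])


/-- For `n ≥ 2`, the non-dominated set of the MSp instance
`(G_n, c1, c2)` has at least `2 ^ n` elements. -/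
theorem YN_Gn_card_ge (n : ℕ) (hn : 2 ≤ n) :
    2 ^ n ≤ (YN (Gn n) (c1G n) (c2G n)).ncard := by
  classical
  have hinj : Function.Injective
      (fun A : Finset (Fin n) => valueVec (Gn n) (c1G n) (c2G n) (SA n A)) := by
    intro A A' h
    have h1 : (f1 (c1G n) (SA n A) : ℚ) = (f1 (c1G n) (SA n A') : ℚ) := congrArg Prod.fst h
    rw [f1_SA_nat hn, f1_SA_nat hn] at h1
    exact sumA_inj (by exact_mod_cast h1)
  have hsub : Set.range (fun A : Finset (Fin n) => valueVec (Gn n) (c1G n) (c2G n) (SA n A))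
      ⊆ YN (Gn n) (c1G n) (c2G n) := by
    rintro y ⟨A, rfl⟩
    exact ⟨⟨SA n A, SA_spanner hn A, rfl⟩, fun S' hS' => SA_nondominated hn A S' hS'⟩
  have hfin : (YN (Gn n) (c1G n) (c2G n)).Finite := by
    apply Set.Finite.subset (Set.finite_range
      (fun S : Finset (Sym2 (Vtx n)) => valueVec (Gn n) (c1G n) (c2G n) S))
    rintro y ⟨⟨S, _, rfl⟩, _⟩
    exact ⟨S, rfl⟩
  have hcard : (Set.range
      (fun A : Finset (Fin n) => valueVec (Gn n) (c1G n) (c2G n) (SA n A))).ncard = 2 ^ n := by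
    rw [← Set.image_univ, Set.ncard_image_of_injective _ hinj, Set.ncard_univ,
      Nat.card_eq_fintype_card, Fintype.card_finset, Fintype.card_fin]
  calc 2 ^ n = _ := hcard.symm
  _ ≤ _ := Set.ncard_le_ncard hsub hfin


end MSpPaper
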